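/- For every n ≥ 2 and h ≥ 0, the set of bargraphs of semiperimeter n whose least column height exceeds h is in bijection with the set of bargraphs of semiperimeter n−h; explicitly, a bijection is given by deleting the initial U^h and the final D^h. -/

import Mathlib

/-- Steps of bargraphs / Motzkin paths. -/
inductive Step where
  | U : Step
  | H : Step
  | D : Step
deriving DecidableEq

/-- Vertical displacement of a step. -/
def Step.val : Step → ℤ
  | .U => 1
  | .H => 0
  | .D => -1

/-- Mirror of a step (swap U and D). -/
def Step.mirror : Step → Step
  | .U => .D
  | .H => .H
  | .D => .U

/-- Final height of a word. -/
def hgt (w : List Step) : ℤ := (w.map Step.val).sum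

/-- A Motzkin path prefix: never goes below the x-axis. -/
def IsMotzkinPrefix (w : List Step) : Prop := ∀ p : List Step, p <+: w → 0 ≤ hgt p

/-- A Motzkin path: never below the x-axis, ends at height 0. -/
def IsMotzkin (w : List Step) : Prop := IsMotzkinPrefix w ∧ hgt w = 0

/-- No peak `UD` and no valley `DU`. -/
def Cornerless (w : List Step) : Prop :=
  ¬ [Step.U, Step.D] <:+: w ∧ ¬ [Step.D, Step.U] <:+: w

/-- A bargraph: starts at the origin, ends on the x-axis, stays strictly above the
x-axis except at the endpoints, and has no factor `UD` or `DU`. -/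
def IsBargraph (w : List Step) : Prop :=
  2 ≤ w.length ∧ hgt w = 0 ∧
    (∀ p : List Step, p <+: w → p ≠ [] → p ≠ w → 0 < hgt p) ∧ Cornerless w

/-- Semiperimeter: number of `U` steps plus number of `H` steps. -/
def semi (w : List Step) : ℕ := w.count Step.U + w.count Step.H

/-- Length of the initial run of `U` steps. -/
def leadU : List Step → ℕ
  | Step.U :: rest => leadU rest + 1
  | _ => 0

/-- Length of the initial run of `H` steps. -/
def leadH : List Step → ℕ
  | Step.H :: rest => leadH rest + 1
  | _ => 0

/-- Length of the initial run of `D` steps. -/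
def leadD : List Step → ℕ
  | Step.D :: rest => leadD rest + 1
  | _ => 0

/-- Length of the first maximal run of `D` steps (0 if none). -/
def firstDescLen : List Step → ℕ
  | [] => 0
  | Step.D :: rest => leadD rest + 1
  | _ :: rest => firstDescLen rest

/-- Number of occurrences of the two-letter factor `a b`. -/
def cnt2 (a b : Step) : List Step → ℕ
  | x :: y :: rest => (if x = a ∧ y = b then 1 else 0) + cnt2 a b (y :: rest)
  | _ => 0

/-- Heights of the columns (`H` steps), starting from a given height. -/
def colHeights : ℤ → List Step → List ℤ
  | _, [] => []
  | h, Step.U :: rest => colHeights (h + 1) rest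
  | h, Step.H :: rest => h :: colHeights h rest
  | h, Step.D :: rest => colHeights (h - 1) rest

/-- Width of the leftmost maximal horizontal segment (0 if none). -/
def lhsW : List Step → ℕ
  | [] => 0
  | Step.H :: rest => leadH rest + 1
  | _ :: rest => lhsW rest

/-- Delete `h` steps at the start of the leftmost horizontal segment. -/
def stripLeadH (h : ℕ) : List Step → List Step
  | [] => []
  | Step.H :: rest => List.drop h (Step.H :: rest)
  | s :: rest => s :: stripLeadH h rest

/-- Number of initial columns of height 1: largest `j` such that the word begins `U H^j`. -/
def iuc : List Step → ℕ
  | Step.U :: rest => leadH rest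
  | _ => 0

/-- Number of maximal horizontal segments. -/
def hsCount : List Step → ℕ
  | [] => 0
  | [Step.H] => 1
  | [_] => 0
  | a :: b :: rest => (if a = Step.H ∧ b ≠ Step.H then 1 else 0) + hsCount (b :: rest)

/-- Mirror image: reverse the word and swap `U` with `D`. -/
def mir (w : List Step) : List Step := (w.reverse).map Step.mirror

/-- Shape of strictly alternating bargraphs:
`U^{i₁} H D^{k₁} H U^{i₂} H D^{k₂} H ⋯ U^{iₘ} H D^{kₘ}` with all `iᵣ, kᵣ ≥ 1`. -/
inductive SAShape : List Step → Prop where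
  | base (i k : ℕ) : 1 ≤ i → 1 ≤ k →
      SAShape (List.replicate i Step.U ++ [Step.H] ++ List.replicate k Step.D)
  | cons (i k : ℕ) (w : List Step) : 1 ≤ i → 1 ≤ k → SAShape w →
      SAShape (List.replicate i Step.U ++ [Step.H] ++ List.replicate k Step.D ++ [Step.H] ++ w)

/-- A strictly alternating bargraph. -/
def IsStrictAlt (w : List Step) : Prop := IsBargraph w ∧ SAShape w

/-- A secondary structure on `{0, …, m-1}`: all consecutive edges are present, every
vertex has at most one non-consecutive neighbour, and there are no crossing edges. -/
def IsSecondaryStructure {m : ℕ} (G : SimpleGraph (Fin m)) : Prop :=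
  (∀ i j : Fin m, (i : ℕ) + 1 = (j : ℕ) → G.Adj i j) ∧
  (∀ i j k : Fin m, G.Adj i j → G.Adj i k →
      (i : ℕ) + 1 ≠ (j : ℕ) → (j : ℕ) + 1 ≠ (i : ℕ) →
      (i : ℕ) + 1 ≠ (k : ℕ) → (k : ℕ) + 1 ≠ (i : ℕ) → j = k) ∧
  ¬ ∃ i j k l : Fin m, (i : ℕ) < (j : ℕ) ∧ (j : ℕ) < (k : ℕ) ∧ (k : ℕ) < (l : ℕ) ∧
      G.Adj i k ∧ G.Adj j l

/-- Generating function of bargraphs: `x` (variable 0) marks `H` steps,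
`y` (variable 1) marks `U` steps. -/
noncomputable def BG : MvPowerSeries (Fin 2) ℚ :=
  fun d => (Nat.card {w : List Step //
    IsBargraph w ∧ w.count Step.H = d 0 ∧ w.count Step.U = d 1} : ℚ)

/-- Generating function of cornerless Motzkin paths. -/
noncomputable def MG : MvPowerSeries (Fin 2) ℚ :=
  fun d => (Nat.card {w : List Step //
    IsMotzkin w ∧ Cornerless w ∧ w.count Step.H = d 0 ∧ w.count Step.U = d 1} : ℚ)

/-- Generating function of bargraphs avoiding the factor `DH`. -/
noncomputable def BDH : MvPowerSeries (Fin 2) ℚ :=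
  fun d => (Nat.card {w : List Step //
    IsBargraph w ∧ ¬ [Step.D, Step.H] <:+: w ∧
      w.count Step.H = d 0 ∧ w.count Step.U = d 1} : ℚ)

/-- Generating function of bargraphs avoiding the factors `DH` and `HH`. -/
noncomputable def BDHHH : MvPowerSeries (Fin 2) ℚ :=
  fun d => (Nat.card {w : List Step //
    IsBargraph w ∧ ¬ [Step.D, Step.H] <:+: w ∧ ¬ [Step.H, Step.H] <:+: w ∧
      w.count Step.H = d 0 ∧ w.count Step.U = d 1} : ℚ)

/-- Generating function of cornerless Motzkin path prefixes ending at height `h`. -/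
noncomputable def Pgf (h : ℕ) : MvPowerSeries (Fin 2) ℚ :=
  fun d => (Nat.card {w : List Step //
    IsMotzkinPrefix w ∧ Cornerless w ∧ hgt w = (h : ℤ) ∧
      w.count Step.H = d 0 ∧ w.count Step.U = d 1} : ℚ)

/-- Decomposition `G = U^a G₁ H G₂ D^a` of a strictly alternating bargraph. -/
def SADecomp (t : ℕ × List Step × List Step) (G : List Step) : Prop :=
  1 ≤ t.1 ∧ IsStrictAlt t.2.1 ∧ IsStrictAlt (Step.U :: (t.2.2 ++ [Step.D])) ∧
    G = List.replicate t.1 Step.U ++ t.2.1 ++ [Step.H] ++ t.2.2 ++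
      List.replicate t.1 Step.D

section Aux

/-- Adjacent-pair relation forbidding UD and DU. -/
def Pok (a b : Step) : Prop := ¬(a = Step.U ∧ b = Step.D) ∧ ¬(a = Step.D ∧ b = Step.U)

lemma hgt_nil : hgt [] = 0 := rfl
lemma hgt_cons (a : Step) (l : List Step) : hgt (a :: l) = a.val + hgt l := by
  simp [hgt]
lemma hgt_append (l₁ l₂ : List Step) : hgt (l₁ ++ l₂) = hgt l₁ + hgt l₂ := by
  simp [hgt]
lemma hgt_replicate_U (k : ℕ) : hgt (List.replicate k Step.U) = k := by
  simp [hgt, Step.val]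
lemma hgt_replicate_D (k : ℕ) : hgt (List.replicate k Step.D) = -k := by
  simp [hgt, Step.val]

lemma cornerless_chain' {w : List Step} (hc : Cornerless w) : List.Chain' Pok w := by
  induction w with
  | nil => exact List.IsChain.nil
  | cons x rest ih =>
    show List.IsChain Pok (x :: rest)
    rw [List.isChain_cons]
    constructor
    · intro y hy
      cases rest with
      | nil => simp at hy
      | cons z t =>
        simp at hy; subst hy
        constructor
        · rintro ⟨rfl, rfl⟩
          exact hc.1 ⟨[], t, rfl⟩
        · rintro ⟨rfl, rfl⟩
          exact hc.2 ⟨[], t, rfl⟩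
    · apply ih
      constructor
      · intro h; exact hc.1 (h.trans (List.infix_cons_iff.mpr (Or.inr (List.infix_refl _))))
      · intro h; exact hc.2 (h.trans (List.infix_cons_iff.mpr (Or.inr (List.infix_refl _))))

lemma chain'_cornerless {w : List Step} (hc : List.Chain' Pok w) : Cornerless w := by
  constructor
  · rintro ⟨s, t, rfl⟩
    rw [List.append_assoc] at hc
    have := (List.isChain_append.mp hc).2.1
    exact (List.isChain_cons_cons.mp this).1.1 ⟨rfl, rfl⟩
  · rintro ⟨s, t, rfl⟩
    rw [List.append_assoc] at hc
    have := (List.isChain_append.mp hc).2.1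
    exact (List.isChain_cons_cons.mp this).1.2 ⟨rfl, rfl⟩

end Aux
section Aux2

lemma colHeights_append (l₁ l₂ : List Step) : ∀ a : ℤ,
    colHeights a (l₁ ++ l₂) = colHeights a l₁ ++ colHeights (a + hgt l₁) l₂ := by
  induction l₁ with
  | nil => intro a; simp [colHeights, hgt_nil]
  | cons x rest ih =>
    intro a
    cases x <;> simp [colHeights, ih, hgt_cons, Step.val] <;> ring_nf

lemma colHeights_shift (l : List Step) : ∀ a : ℤ,
    colHeights a l = (colHeights 0 l).map (· + a) := by
  induction l with
  | nil => intro a; simp [colHeights]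
  | cons x rest ih =>
    intro a
    cases x with
    | U =>
      show colHeights (a+1) rest = List.map (· + a) (colHeights (0+1) rest)
      rw [ih (a+1), ih (0+1), List.map_map]
      congr 1; funext c; simp [Function.comp]; ring
    | H =>
      show a :: colHeights a rest = List.map (· + a) ((0:ℤ) :: colHeights 0 rest)
      rw [ih a]; simp
    | D =>
      show colHeights (a-1) rest = List.map (· + a) (colHeights (0-1) rest)
      rw [ih (a-1), ih (0-1), List.map_map]
      congr 1; funext c; simp [Function.comp]; ring

lemma mem_colHeights {c : ℤ} {w : List Step} : ∀ {a : ℤ},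
    c ∈ colHeights a w ↔ ∃ p s, w = p ++ Step.H :: s ∧ c = a + hgt p := by
  induction w with
  | nil =>
    intro a
    simp [colHeights]
  | cons x rest ih =>
    intro a
    cases x with
    | U =>
      rw [show colHeights a (Step.U :: rest) = colHeights (a+1) rest from rfl, ih]
      constructor
      · rintro ⟨p, s, rfl, rfl⟩
        exact ⟨Step.U :: p, s, rfl, by rw [hgt_cons]; simp [Step.val]; ring⟩
      · rintro ⟨p, s, hps, rfl⟩
        match p, hps with
        | Step.U :: p', hps =>
          simp at hps
          exact ⟨p', s, hps, by rw [hgt_cons]; simp [Step.val]; ring⟩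
    | H =>
      rw [show colHeights a (Step.H :: rest) = a :: colHeights a rest from rfl]
      simp only [List.mem_cons, ih]
      constructor
      · rintro (rfl | ⟨p, s, rfl, rfl⟩)
        · exact ⟨[], rest, rfl, by simp [hgt_nil]⟩
        · exact ⟨Step.H :: p, s, rfl, by rw [hgt_cons]; simp [Step.val]⟩
      · rintro ⟨p, s, hps, rfl⟩
        match p, hps with
        | [], hps =>
          simp [hgt_nil]
        | Step.H :: p', hps =>
          simp at hps
          exact Or.inr ⟨p', s, hps, by rw [hgt_cons]; simp [Step.val]⟩
    | D =>
      rw [show colHeights a (Step.D :: rest) = colHeights (a-1) rest from rfl, ih]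
      constructor
      · rintro ⟨p, s, rfl, rfl⟩
        exact ⟨Step.D :: p, s, rfl, by rw [hgt_cons]; simp [Step.val]; ring⟩
      · rintro ⟨p, s, hps, rfl⟩
        match p, hps with
        | Step.D :: p', hps =>
          simp at hps
          exact ⟨p', s, hps, by rw [hgt_cons]; simp [Step.val]; ring⟩

end Aux2
section Aux3

lemma step_val_pos {a : Step} (h : 0 < a.val) : a = Step.U := by
  cases a <;> simp [Step.val] at h ⊢

lemma step_val_neg {a : Step} (h : a.val < 0) : a = Step.D := by
  cases a <;> simp [Step.val] at h ⊢

lemma bargraph_decomp {w : List Step} (hb : IsBargraph w) :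
    ∃ m, w = Step.U :: m ++ [Step.D] := by
  obtain ⟨hl, h0, hpos, hc⟩ := hb
  match w, hl with
  | a :: b :: t, _ =>
    have ha : a = Step.U := by
      have := hpos [a] ⟨b :: t, rfl⟩ (by simp) (by simp)
      rw [hgt_cons, hgt_nil, add_zero] at this
      exact step_val_pos this
    subst ha
    have hne : b :: t ≠ [] := by simp
    have h3 : (b :: t).dropLast ++ [(b :: t).getLast hne] = b :: t :=
      List.dropLast_append_getLast hne
    have hlast : (b :: t).getLast hne = Step.D := by
      have hp : Step.U :: (b :: t).dropLast <+: Step.U :: b :: t :=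
        ⟨[(b :: t).getLast hne], by rw [List.cons_append, h3]⟩
      have hd2 : Step.U :: (b :: t).dropLast ≠ Step.U :: b :: t := by
        intro h
        have := congrArg List.length h
        simp [List.length_dropLast] at this
      have h1 := hpos _ hp (by simp) hd2
      have h2 : hgt (Step.U :: ((b :: t).dropLast ++ [(b :: t).getLast hne])) = 0 := by
        rw [h3]; exact h0
      rw [hgt_cons, hgt_append, hgt_cons, hgt_nil, add_zero] at h2
      rw [hgt_cons] at h1
      exact step_val_neg (by omega)
    refine ⟨(b :: t).dropLast, ?_⟩
    rw [← hlast, List.cons_append, h3]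

lemma cols_pos {w : List Step} (hb : IsBargraph w) :
    ∀ c ∈ colHeights 0 w, 0 < c := by
  intro c hcmem
  obtain ⟨p, s, hps, rfl⟩ := mem_colHeights.mp hcmem
  obtain ⟨m, hm⟩ := bargraph_decomp hb
  obtain ⟨hl, h0, hpos, hc⟩ := hb
  have hp1 : p ≠ [] := by
    rintro rfl
    rw [hm] at hps
    simp at hps
  have hp2 : p ≠ w := by
    intro h
    have := congrArg List.length hps
    rw [h] at this
    simp at this
  have := hpos p ⟨Step.H :: s, hps.symm⟩ hp1 hp2
  omega

end Aux3
section Aux4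

lemma cols_UD (m : List Step) :
    colHeights 0 (Step.U :: m ++ [Step.D]) = (colHeights 0 m).map (· + 1) := by
  show colHeights (0+1) (m ++ [Step.D]) = _
  rw [colHeights_append, colHeights_shift]
  simp [colHeights]

lemma semi_UD (m : List Step) : semi (Step.U :: m ++ [Step.D]) = semi m + 1 := by
  simp [semi, List.count_cons, List.count_append]
  omega

lemma Pok_trivial {a b : Step} (h : b ≠ Step.D ∨ a ≠ Step.U) (h2 : b ≠ Step.U ∨ a ≠ Step.D) :
    Pok a b := by
  constructor
  · rintro ⟨rfl, rfl⟩; tauto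
  · rintro ⟨rfl, rfl⟩; tauto

lemma pad_one {m : List Step} (hb : IsBargraph m) :
    IsBargraph (Step.U :: m ++ [Step.D]) := by
  obtain ⟨k, hk⟩ := bargraph_decomp hb
  obtain ⟨hl, h0, hpos, hc⟩ := hb
  refine ⟨by simp, ?_, ?_, ?_⟩
  · rw [hgt_append, hgt_cons, h0, hgt_cons, hgt_nil]
    simp [Step.val]
  · rintro p hp hpne hpw
    match p, hpne with
    | a :: q, _ =>
      rw [show Step.U :: m ++ [Step.D] = Step.U :: (m ++ [Step.D]) from rfl,
        List.cons_prefix_cons] at hp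
      obtain ⟨rfl, hq⟩ := hp
      rcases List.prefix_concat_iff.mp hq with rfl | hq'
      · exact absurd rfl hpw
      · rw [hgt_cons]
        rcases eq_or_ne q m with rfl | hqm
        · rw [h0]; simp [Step.val]
        · rcases eq_or_ne q [] with rfl | hqnil
          · simp [hgt_nil, Step.val]
          · have := hpos q hq' hqnil hqm
            simp [Step.val]; omega
  · apply chain'_cornerless
    have hch := cornerless_chain' hc
    show List.IsChain Pok (Step.U :: m ++ [Step.D])
    rw [show Step.U :: m ++ [Step.D] = (Step.U :: m) ++ [Step.D] from rfl,
      List.isChain_append]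
    refine ⟨?_, by simp, ?_⟩
    · rw [List.isChain_cons]
      refine ⟨?_, hch⟩
      intro y hy
      rw [hk] at hy; simp at hy; subst hy
      exact Pok_trivial (by simp) (by simp)
    · intro x hx y hy
      simp at hy; subst hy
      have : (Step.U :: m).getLast? = some Step.D := by
        rw [hk, show Step.U :: ((Step.U :: k) ++ [Step.D]) = (Step.U :: Step.U :: k) ++ [Step.D] from rfl]
        exact List.getLast?_concat
      rw [this] at hx; simp at hx; subst hx
      exact Pok_trivial (by simp) (by simp)

lemma all_eq_U : ∀ t : List Step, List.Chain' Pok (Step.U :: t) →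
    Step.H ∉ (Step.U :: t) → ∀ x ∈ Step.U :: t, x = Step.U := by
  intro t
  induction t with
  | nil => intro _ _ x hx; simpa using hx
  | cons y t' ih =>
    intro hch hH x hx
    have h1 : Pok Step.U y := (List.isChain_cons_cons.mp hch).1
    have hyU : y = Step.U := by
      cases y
      · rfl
      · exact absurd (by simp) hH
      · exact absurd ⟨rfl, rfl⟩ h1.1
    subst hyU
    rw [List.mem_cons] at hx
    rcases hx with rfl | hx
    · rfl
    · exact ih (List.isChain_cons_cons.mp hch).2 (fun h => hH (by simp [h])) x hx

lemma semi_ge_two {w : List Step} (hb : IsBargraph w) : 2 ≤ semi w := by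
  obtain ⟨m, hm⟩ := bargraph_decomp hb
  obtain ⟨hl, h0, hpos, hc⟩ := hb
  have hU : Step.U ∈ w := by rw [hm]; simp
  have hH : Step.H ∈ w := by
    by_contra hH
    have hall := all_eq_U (m ++ [Step.D])
      (by rw [← List.cons_append, ← hm]; exact cornerless_chain' hc)
      (by rw [← List.cons_append, ← hm]; exact hH)
    rw [← List.cons_append, ← hm] at hall
    have : w = List.replicate w.length Step.U := List.eq_replicate_of_mem hall
    rw [this, hgt_replicate_U] at h0
    omega
  have h1 : 1 ≤ w.count Step.U := List.count_pos_iff.mpr hU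
  have h2 : 1 ≤ w.count Step.H := List.count_pos_iff.mpr hH
  unfold semi
  omega

end Aux4
section Aux5

lemma strip_one {m : List Step} (hb : IsBargraph (Step.U :: m ++ [Step.D]))
    (hcols : ∀ c ∈ colHeights 0 (Step.U :: m ++ [Step.D]), 1 < c) :
    IsBargraph m := by
  obtain ⟨hl, h0, hpos, hc⟩ := hb
  have hm0 : hgt m = 0 := by
    rw [hgt_append, hgt_cons, hgt_cons, hgt_nil] at h0
    simp [Step.val] at h0
    omega
  have hminf : m <:+: Step.U :: m ++ [Step.D] := ⟨[Step.U], [Step.D], rfl⟩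
  refine ⟨?_, hm0, ?_, ?_⟩
  · -- length ≥ 2
    match m with
    | [] => exact absurd ⟨[], [], rfl⟩ hc.1
    | [Step.U] => exact absurd ⟨[Step.U], [], rfl⟩ hc.1
    | [Step.D] => exact absurd ⟨[], [Step.D], rfl⟩ hc.1
    | [Step.H] =>
      have : (1:ℤ) ∈ colHeights 0 (Step.U :: [Step.H] ++ [Step.D]) := by
        norm_num [colHeights]
      exact absurd (hcols 1 this) (by omega)
    | x :: y :: t => simp
  · -- interior positivity
    intro p hp hpne hpm
    obtain ⟨r, hr⟩ := hp
    have hrne : r ≠ [] := by rintro rfl; rw [List.append_nil] at hr; exact hpm hr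
    obtain ⟨y, r', rfl⟩ : ∃ y r', r = y :: r' := by
      cases r with
      | nil => exact absurd rfl hrne
      | cons a b => exact ⟨a, b, rfl⟩
    have hml := congrArg List.length hr
    simp at hml
    have hUp : Step.U :: p <+: Step.U :: m ++ [Step.D] :=
      ⟨y :: r' ++ [Step.D], by rw [← hr]; simp⟩
    have h1 := hpos (Step.U :: p) hUp (by simp)
      (by intro h; apply congrArg List.length at h; simp at h; omega)
    rw [hgt_cons] at h1
    simp [Step.val] at h1
    by_contra hcon
    have hp0 : hgt p = 0 := by omega
    obtain ⟨p', x, rfl⟩ : ∃ p' x, p = p' ++ [x] :=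
      ⟨p.dropLast, p.getLast hpne, (List.dropLast_append_getLast hpne).symm⟩
    simp only [List.length_append, List.length_singleton] at hml
    rw [hgt_append, hgt_cons, hgt_nil, add_zero] at hp0
    cases x with
    | U =>
      simp [Step.val] at hp0
      have hpre : Step.U :: p' <+: Step.U :: m ++ [Step.D] :=
        ⟨Step.U :: y :: r' ++ [Step.D], by rw [← hr]; simp⟩
      have h2 := hpos _ hpre (by simp)
        (by intro h; apply congrArg List.length at h; simp at h; omega)
      rw [hgt_cons] at h2
      simp [Step.val] at h2
      omega
    | H =>
      simp [Step.val] at hp0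
      have hcol : (1:ℤ) ∈ colHeights 0 (Step.U :: m ++ [Step.D]) := by
        apply mem_colHeights.mpr
        refine ⟨Step.U :: p', y :: r' ++ [Step.D], by rw [← hr]; simp, ?_⟩
        rw [hgt_cons]
        simp [Step.val]
        omega
      exact absurd (hcols 1 hcol) (by omega)
    | D =>
      simp [Step.val] at hp0
      cases y with
      | U => exact hc.2 ⟨Step.U :: p', r' ++ [Step.D], by rw [← hr]; simp⟩
      | H =>
        have hcol : (1:ℤ) ∈ colHeights 0 (Step.U :: m ++ [Step.D]) := by
          apply mem_colHeights.mpr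
          refine ⟨Step.U :: (p' ++ [Step.D]), r' ++ [Step.D], by rw [← hr]; simp, ?_⟩
          rw [hgt_cons, hgt_append, hgt_cons, hgt_nil]
          simp [Step.val]
          omega
        exact absurd (hcols 1 hcol) (by omega)
      | D =>
        have hpre : Step.U :: (p' ++ [Step.D]) ++ [Step.D] <+: Step.U :: m ++ [Step.D] :=
          ⟨r' ++ [Step.D], by rw [← hr]; simp⟩
        have h2 := hpos _ hpre (by simp)
          (by intro h; apply congrArg List.length at h; simp at h; omega)
        simp [hgt_append, hgt_cons, hgt_nil, Step.val] at h2
        omega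
  · -- cornerless
    exact ⟨fun h => hc.1 (h.trans hminf), fun h => hc.2 (h.trans hminf)⟩

end Aux5
section Aux6

lemma pad_iter (h : ℕ) {m : List Step} (hb : IsBargraph m) :
    IsBargraph (List.replicate h Step.U ++ m ++ List.replicate h Step.D) ∧
    colHeights 0 (List.replicate h Step.U ++ m ++ List.replicate h Step.D) =
      (colHeights 0 m).map (· + (h : ℤ)) ∧
    semi (List.replicate h Step.U ++ m ++ List.replicate h Step.D) = semi m + h := by
  induction h with
  | zero => simpa using hb
  | succ h ih =>
    obtain ⟨ih1, ih2, ih3⟩ := ih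
    have heq : List.replicate (h+1) Step.U ++ m ++ List.replicate (h+1) Step.D =
        Step.U :: (List.replicate h Step.U ++ m ++ List.replicate h Step.D) ++ [Step.D] := by
      rw [List.replicate_succ, List.replicate_succ' (n := h)]
      simp
    rw [heq]
    refine ⟨pad_one ih1, ?_, ?_⟩
    · rw [cols_UD, ih2, List.map_map]
      congr 1
      funext c
      simp [Function.comp]
      push_cast
      ring
    · rw [semi_UD, ih3]; omega

lemma strip_iter (h : ℕ) : ∀ {w : List Step}, IsBargraph w →
    (∀ c ∈ colHeights 0 w, (h:ℤ) < c) →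
    ∃ m, w = List.replicate h Step.U ++ m ++ List.replicate h Step.D ∧
      IsBargraph m ∧ semi w = semi m + h := by
  induction h with
  | zero => intro w hb _; exact ⟨w, by simp, hb, by simp⟩
  | succ h ih =>
    intro w hb hcols
    obtain ⟨m1, rfl⟩ := bargraph_decomp hb
    have hcols1 : ∀ c ∈ colHeights 0 m1, (h:ℤ) < c := by
      intro c hcm
      have := hcols (c+1) (by rw [cols_UD]; exact List.mem_map.mpr ⟨c, hcm, rfl⟩)
      push_cast at this ⊢
      omega
    have hb1 : IsBargraph m1 := strip_one hb (by
      intro c hc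
      have := hcols c hc
      push_cast at this
      omega)
    obtain ⟨m, rfl, hbm, hsemi⟩ := ih hb1 hcols1
    refine ⟨m, ?_, hbm, ?_⟩
    · rw [List.replicate_succ, List.replicate_succ' (n := h)]
      simp
    · rw [semi_UD, hsemi]
      ring

lemma drop_drop_eq (h : ℕ) (m : List Step) :
    ((((List.replicate h Step.U ++ m ++ List.replicate h Step.D).drop h).reverse).drop h).reverse
      = m := by
  rw [List.append_assoc,
    List.drop_left' (by simp : (List.replicate h Step.U).length = h),
    List.reverse_append, List.reverse_replicate,
    List.drop_left' (by simp : (List.replicate h Step.D).length = h),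
    List.reverse_reverse]

end Aux6
section Main

lemma Fprop {n h : ℕ} (w : List Step) (hb : IsBargraph w) (hs : semi w = n)
    (hcols : ∀ c ∈ colHeights 0 w, (h:ℤ) < c) :
    IsBargraph (((w.drop h).reverse.drop h).reverse) ∧
    semi (((w.drop h).reverse.drop h).reverse) = n - h ∧
    List.replicate h Step.U ++ (((w.drop h).reverse.drop h).reverse) ++
      List.replicate h Step.D = w := by
  obtain ⟨m, rfl, hbm, hsemi⟩ := strip_iter h hb hcols
  rw [drop_drop_eq]
  exact ⟨hbm, by omega, rfl⟩

lemma Gprop {n h : ℕ} (hh : h + 2 ≤ n) (w : List Step) (hb : IsBargraph w)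
    (hs : semi w = n - h) :
    IsBargraph (List.replicate h Step.U ++ w ++ List.replicate h Step.D) ∧
    semi (List.replicate h Step.U ++ w ++ List.replicate h Step.D) = n ∧
    ∀ c ∈ colHeights 0 (List.replicate h Step.U ++ w ++ List.replicate h Step.D),
      (h:ℤ) < c := by
  obtain ⟨h1, h2, h3⟩ := pad_iter h hb
  refine ⟨h1, by omega, ?_⟩
  intro c hc
  rw [h2] at hc
  obtain ⟨c0, hc0, rfl⟩ := List.mem_map.mp hc
  have := cols_pos hb c0 hc0
  omega

private theorem lch_bijection_aux :
    ∀ n h : ℕ, 2 ≤ n →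
      ∃ e : {w : List Step // IsBargraph w ∧ semi w = n ∧
              ∀ c ∈ colHeights 0 w, (h : ℤ) < c} ≃
            {w : List Step // IsBargraph w ∧ semi w = n - h},
        ∀ w, (e w).1 = ((w.1.drop h).reverse.drop h).reverse := by
  intro n h hn
  by_cases hcase : h + 2 ≤ n
  · refine ⟨{
      toFun := fun w => ⟨((w.1.drop h).reverse.drop h).reverse,
        (Fprop w.1 w.2.1 w.2.2.1 w.2.2.2).1, (Fprop w.1 w.2.1 w.2.2.1 w.2.2.2).2.1⟩
      invFun := fun w => ⟨List.replicate h Step.U ++ w.1 ++ List.replicate h Step.D,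
        (Gprop hcase w.1 w.2.1 w.2.2).1, (Gprop hcase w.1 w.2.1 w.2.2).2.1,
        (Gprop hcase w.1 w.2.1 w.2.2).2.2⟩
      left_inv := fun w => Subtype.ext (Fprop w.1 w.2.1 w.2.2.1 w.2.2.2).2.2
      right_inv := fun w => Subtype.ext (drop_drop_eq h w.1) }, fun w => rfl⟩
  · have hA : IsEmpty {w : List Step // IsBargraph w ∧ semi w = n ∧
        ∀ c ∈ colHeights 0 w, (h : ℤ) < c} := by
      refine ⟨fun w => ?_⟩
      obtain ⟨m, _, hbm, hsemi⟩ := strip_iter h w.2.1 w.2.2.2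
      have := semi_ge_two hbm
      have := w.2.2.1
      omega
    have hB : IsEmpty {w : List Step // IsBargraph w ∧ semi w = n - h} := by
      refine ⟨fun w => ?_⟩
      have := semi_ge_two w.2.1
      have := w.2.2
      omega
    exact ⟨Equiv.equivOfIsEmpty _ _, fun w => isEmptyElim w⟩

end Main

/-- bargraphs of semiperimeter `n` with least column height `> h` are in
bijection with bargraphs of semiperimeter `n - h`, by deleting the initial `U^h` and
the final `D^h`. -/
theorem lch_bijection :
    ∀ n h : ℕ, 2 ≤ n →
      ∃ e : {w : List Step // IsBargraph w ∧ semi w = n ∧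
              ∀ c ∈ colHeights 0 w, (h : ℤ) < c} ≃
            {w : List Step // IsBargraph w ∧ semi w = n - h},
        ∀ w, (e w).1 = ((w.1.drop h).reverse.drop h).reverse :=
  lch_bijection_aux
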